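/- Let U(t,k) = e^{-it(kL+H)} for Hermitian matrices L and H, and let U^{(q)}(t,k) denote the q-th partial derivative of U with respect to k. Then for every integer q ≥ 0 and all t ≥ 0, ‖U^{(q)}(t,k)‖ ≤ t^q · q^q · ‖L‖^q. -/

import Mathlib

set_option linter.unusedSectionVars false

namespace IterUnitBound

variable {𝔸 : Type*} [NormedRing 𝔸] [NormedAlgebra ℝ 𝔸] [CompleteSpace 𝔸]

/-- `W A B q n k` represents the `q`-th `k`-derivative of `(k • B + A) ^ n`. -/
noncomputable def W (A B : 𝔸) : ℕ → ℕ → ℝ → 𝔸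
  | q, 0, _ => if q = 0 then 1 else 0
  | q, n + 1, k => (k • B + A) * W A B q n k + (q : ℝ) • (B * W A B (q - 1) n k)

theorem W_hasDerivAt (A B : 𝔸) (n : ℕ) : ∀ (q : ℕ) (k : ℝ),
    HasDerivAt (fun k' : ℝ => W A B q n k') (W A B (q + 1) n k) k := by
  induction n with
  | zero =>
    intro q k
    simp only [W, Nat.succ_ne_zero, if_false]
    exact hasDerivAt_const k _
  | succ n ih =>
    intro q k
    have h1 : HasDerivAt (fun k' : ℝ => k' • B + A) B k := by
      simpa using ((hasDerivAt_id k).smul_const B).add_const A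
    have h2 := ((h1.mul (ih q k)).add
      (((ih (q - 1) k).const_mul B).const_smul (q : ℝ)))
    simp only [W]
    convert h2 using 1
    case e'_4 => rfl
    case e'_8 => rfl
    cases q with
    | zero => simp; abel
    | succ s =>
      simp only [Nat.succ_sub_one]
      push_cast
      module

theorem key_ineq (q : ℕ) (x : ℝ) (hx : 0 ≤ x) :
    x ^ q + q * x ^ (q - 1) ≤ (x + 1) ^ q := by
  induction q with
  | zero => simp
  | succ s ih =>
    cases s with
    | zero => simp
    | succ r =>
      have h1 : (0:ℝ) ≤ x + 1 := by linarith
      simp only [Nat.add_sub_cancel] at ih ⊢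
      push_cast at ih ⊢
      have h2 := mul_le_mul_of_nonneg_right ih h1
      have hp : (0:ℝ) ≤ x ^ r := pow_nonneg hx r
      have expand : (x ^ (r+1) + ((r:ℝ)+1) * x ^ r) * (x + 1)
          = x^(r+1+1) + ((r:ℝ)+1+1)*x^(r+1) + ((r:ℝ)+1)*x^r := by ring
      have h4 : (x+1)^(r+1+1) = (x+1)^(r+1) * (x+1) := by ring
      have h5 : (0:ℝ) ≤ ((r:ℝ)+1)*x^r := by positivity
      rw [h4]
      linarith [h2, expand]

theorem W_norm_le (A B : 𝔸) (hone : ‖(1 : 𝔸)‖ ≤ 1) (n : ℕ) :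
    ∀ (q : ℕ) (k : ℝ) (C : ℝ), 1 ≤ C → ‖k • B + A‖ ≤ C →
    ‖W A B q n k‖ ≤ (n : ℝ) ^ q * ‖B‖ ^ q * C ^ n := by
  induction n with
  | zero =>
    intro q k C hC1 hC
    cases q with
    | zero => simpa [W] using hone
    | succ s => simp [W]
  | succ n ih =>
    intro q k C hC1 hC
    have hC0 : 0 ≤ C := le_trans zero_le_one hC1
    have hB : 0 ≤ ‖B‖ := norm_nonneg B
    have key := key_ineq q (n : ℝ) (Nat.cast_nonneg n)
    have h1 : ‖W A B q (n+1) k‖ ≤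
        C * ‖W A B q n k‖ + (q : ℝ) * (‖B‖ * ‖W A B (q-1) n k‖) := by
      simp only [W]
      refine le_trans (norm_add_le _ _) (add_le_add ?_ ?_)
      · exact le_trans (norm_mul_le _ _) (mul_le_mul_of_nonneg_right hC (norm_nonneg _))
      · rw [norm_smul, Real.norm_natCast]
        exact mul_le_mul_of_nonneg_left (norm_mul_le _ _) (Nat.cast_nonneg q)
    cases q with
    | zero =>
      refine le_trans h1 ?_
      have := ih 0 k C hC1 hC
      simp only [pow_zero, one_mul, Nat.cast_zero, zero_mul, add_zero] at this ⊢
      calc C * ‖W A B 0 n k‖ ≤ C * C ^ n := by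
            exact mul_le_mul_of_nonneg_left this hC0
        _ = C ^ (n + 1) := by ring
    | succ s =>
      have hq1 : (s + 1 : ℕ) - 1 = s := rfl
      refine le_trans h1 ?_
      have e1 := ih (s+1) k C hC1 hC
      have e2 := ih s k C hC1 hC
      rw [hq1]
      have hCn : C ^ n ≤ C ^ (n + 1) :=
        pow_le_pow_right₀ hC1 (Nat.le_succ n)
      have t1 : C * ‖W A B (s+1) n k‖ ≤ (n:ℝ)^(s+1) * ‖B‖^(s+1) * C^(n+1) := by
        calc C * ‖W A B (s+1) n k‖ ≤ C * ((n:ℝ)^(s+1) * ‖B‖^(s+1) * C^n) :=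
              mul_le_mul_of_nonneg_left e1 hC0
          _ = (n:ℝ)^(s+1) * ‖B‖^(s+1) * C^(n+1) := by ring
      have t2 : ((s+1:ℕ) : ℝ) * (‖B‖ * ‖W A B s n k‖) ≤
          ((s+1:ℕ):ℝ) * (n:ℝ)^s * ‖B‖^(s+1) * C^(n+1) := by
        have : ‖B‖ * ‖W A B s n k‖ ≤ (n:ℝ)^s * ‖B‖^(s+1) * C^n := by
          calc ‖B‖ * ‖W A B s n k‖ ≤ ‖B‖ * ((n:ℝ)^s * ‖B‖^s * C^n) :=
                mul_le_mul_of_nonneg_left e2 hB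
            _ = (n:ℝ)^s * ‖B‖^(s+1) * C^n := by ring
        calc ((s+1:ℕ):ℝ) * (‖B‖ * ‖W A B s n k‖)
            ≤ ((s+1:ℕ):ℝ) * ((n:ℝ)^s * ‖B‖^(s+1) * C^n) :=
              mul_le_mul_of_nonneg_left this (Nat.cast_nonneg _)
          _ ≤ ((s+1:ℕ):ℝ) * ((n:ℝ)^s * ‖B‖^(s+1) * C^(n+1)) := by
              refine mul_le_mul_of_nonneg_left ?_ (Nat.cast_nonneg _)
              refine mul_le_mul_of_nonneg_left hCn (by positivity)
          _ = ((s+1:ℕ):ℝ) * (n:ℝ)^s * ‖B‖^(s+1) * C^(n+1) := by ring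
      calc C * ‖W A B (s+1) n k‖ + ((s+1:ℕ):ℝ) * (‖B‖ * ‖W A B s n k‖)
          ≤ (n:ℝ)^(s+1) * ‖B‖^(s+1) * C^(n+1)
            + ((s+1:ℕ):ℝ) * (n:ℝ)^s * ‖B‖^(s+1) * C^(n+1) := add_le_add t1 t2
        _ = ((n:ℝ)^(s+1) + ((s+1:ℕ):ℝ) * (n:ℝ)^s) * (‖B‖^(s+1) * C^(n+1)) := by ring
        _ ≤ ((n:ℝ)+1)^(s+1) * (‖B‖^(s+1) * C^(n+1)) := by
            refine mul_le_mul_of_nonneg_right ?_ (by positivity)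
            simpa using key
        _ = ((n+1:ℕ):ℝ)^(s+1) * ‖B‖^(s+1) * C^(n+1) := by push_cast; ring


theorem aux_summable (q : ℕ) (r : ℝ) :
    Summable (fun n : ℕ => (n : ℝ) ^ q * r ^ n / n.factorial) := by
  have hr : ∀ n : ℕ, ‖(n : ℝ) ^ q * r ^ n / n.factorial‖ ≤ ((2:ℝ)^q * |r|) ^ n / n.factorial := by
    intro n
    have h1 : (n:ℝ) ^ q ≤ ((2:ℝ)^q)^n := by
      have hn : (n:ℝ) ≤ (2:ℝ)^n := by exact_mod_cast (Nat.lt_two_pow_self).le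
      calc (n:ℝ)^q ≤ ((2:ℝ)^n)^q := pow_le_pow_left₀ (Nat.cast_nonneg n) hn q
        _ = ((2:ℝ)^q)^n := by rw [← pow_mul, ← pow_mul, Nat.mul_comm]
    rw [Real.norm_eq_abs, abs_div, abs_mul, abs_pow, abs_pow, Nat.abs_cast,
      Nat.abs_cast, mul_pow]
    gcongr
  exact Summable.of_norm_bounded (Real.summable_pow_div_factorial _) hr

theorem term_norm_le (A B : 𝔸) (hone : ‖(1 : 𝔸)‖ ≤ 1) (q n : ℕ) (t k : ℝ) {C : ℝ}
    (hC1 : 1 ≤ C) (hC : ‖k • B + A‖ ≤ C) :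
    ‖(t ^ n / n.factorial : ℝ) • W A B q n k‖ ≤
      ‖B‖ ^ q * ((n : ℝ) ^ q * (C * |t|) ^ n / n.factorial) := by
  rw [norm_smul, Real.norm_eq_abs, abs_div, abs_pow, Nat.abs_cast]
  have h1 := W_norm_le A B hone n q k C hC1 hC
  have hC0 : (0:ℝ) ≤ C := zero_le_one.trans hC1
  calc |t| ^ n / (n.factorial : ℝ) * ‖W A B q n k‖
      ≤ |t| ^ n / (n.factorial : ℝ) * ((n : ℝ) ^ q * ‖B‖ ^ q * C ^ n) := by
        exact mul_le_mul_of_nonneg_left h1 (by positivity)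
    _ = ‖B‖ ^ q * ((n : ℝ) ^ q * (C * |t|) ^ n / n.factorial) := by
        rw [mul_pow]; ring

/-- The series of the `q`-th derivative. -/
noncomputable def S (A B : 𝔸) (q : ℕ) (t k : ℝ) : 𝔸 :=
  ∑' n : ℕ, (t ^ n / n.factorial : ℝ) • W A B q n k

theorem S_summable (A B : 𝔸) (hone : ‖(1 : 𝔸)‖ ≤ 1) (q : ℕ) (t k : ℝ) {C : ℝ}
    (hC1 : 1 ≤ C) (hC : ‖k • B + A‖ ≤ C) :
    Summable (fun n : ℕ => (t ^ n / n.factorial : ℝ) • W A B q n k) := by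
  refine Summable.of_norm_bounded (((aux_summable q (C * |t|)).mul_left (‖B‖ ^ q))) ?_
  intro n
  simpa [abs_of_nonneg (by positivity : (0:ℝ) ≤ C * |t|)] using
    term_norm_le A B hone q n t k hC1 hC

theorem S_summable' (A B : 𝔸) (hone : ‖(1 : 𝔸)‖ ≤ 1) (q : ℕ) (t k : ℝ) :
    Summable (fun n : ℕ => (t ^ n / n.factorial : ℝ) • W A B q n k) :=
  S_summable A B hone q t k (le_add_of_nonneg_left (norm_nonneg _))
    (le_add_of_nonneg_right zero_le_one)

theorem S_hasDerivAt_k (A B : 𝔸) (hone : ‖(1 : 𝔸)‖ ≤ 1) (q : ℕ) (t k : ℝ) :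
    HasDerivAt (fun k' : ℝ => S A B q t k') (S A B (q + 1) t k) k := by
  set C : ℝ := ‖k • B + A‖ + ‖B‖ + 1 with hCdef
  have hC1 : 1 ≤ C := by
    have := norm_nonneg (k • B + A); have := norm_nonneg B; simp [hCdef]; linarith
  have hball : ∀ k' ∈ Metric.ball k 1, ‖k' • B + A‖ ≤ C := by
    intro k' hk'
    have hd : |k' - k| < 1 := by simpa [Real.dist_eq] using hk'
    have : k' • B + A = (k' - k) • B + (k • B + A) := by
      rw [sub_smul]; abel
    rw [this]
    calc ‖(k' - k) • B + (k • B + A)‖ ≤ ‖(k' - k) • B‖ + ‖k • B + A‖ := norm_add_le _ _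
      _ ≤ 1 * ‖B‖ + ‖k • B + A‖ := by
          rw [norm_smul, Real.norm_eq_abs]
          have := mul_le_mul_of_nonneg_right hd.le (norm_nonneg B)
          linarith
      _ ≤ C := by simp [hCdef]; linarith [norm_nonneg (k • B + A)]
  have H := hasDerivAt_tsum_of_isPreconnected
    (u := fun n : ℕ => ‖B‖ ^ (q+1) * ((n : ℝ) ^ (q+1) * (C * |t|) ^ n / n.factorial))
    (g := fun (n : ℕ) (k' : ℝ) => (t ^ n / n.factorial : ℝ) • W A B q n k')
    (g' := fun (n : ℕ) (y : ℝ) => (t ^ n / n.factorial : ℝ) • W A B (q+1) n y)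
    ((aux_summable (q+1) (C * |t|)).mul_left _)
    Metric.isOpen_ball (convex_ball k 1).isPreconnected
    (fun n y _ => (W_hasDerivAt A B n q y).const_smul (t ^ n / n.factorial : ℝ))
    (fun n y hy => by
      simpa [abs_of_nonneg (by positivity : (0:ℝ) ≤ C * |t|)] using
        term_norm_le A B hone (q+1) n t y hC1 (hball y hy))
    (Metric.mem_ball_self one_pos)
    (S_summable A B hone q t k hC1 (by simp [hCdef]; linarith [norm_nonneg B]))
    (Metric.mem_ball_self one_pos)
  exact H

theorem W_zero_eq (A B : 𝔸) (n : ℕ) (k : ℝ) : W A B 0 n k = (k • B + A) ^ n := by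
  induction n with
  | zero => simp [W]
  | succ n ih =>
    simp only [W, ih, Nat.cast_zero, zero_smul, add_zero]
    rw [← pow_succ']

theorem S_hasDerivAt_t (A B : 𝔸) (hone : ‖(1 : 𝔸)‖ ≤ 1) (q : ℕ) (t k : ℝ) :
    HasDerivAt (fun t' : ℝ => S A B q t' k)
      ((k • B + A) * S A B q t k + (q : ℝ) • (B * S A B (q - 1) t k)) t := by
  set C : ℝ := ‖k • B + A‖ + 1 with hCdef
  set T : ℝ := |t| + 1 with hTdef
  have hC1 : 1 ≤ C := le_add_of_nonneg_left (norm_nonneg _)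
  have hC : ‖k • B + A‖ ≤ C := le_add_of_nonneg_right zero_le_one
  have hT1 : 1 ≤ T := le_add_of_nonneg_left (abs_nonneg _)
  have htT : t ∈ Metric.ball (0:ℝ) T := by
    simp [Real.dist_eq, hTdef]
  have hderiv : ∀ (n : ℕ) (y : ℝ),
      HasDerivAt (fun t' : ℝ => (t' ^ n / n.factorial : ℝ) • W A B q n k)
        (((n : ℝ) * y ^ (n - 1) / n.factorial) • W A B q n k) y := by
    intro n y
    exact ((hasDerivAt_pow n y).div_const _).smul_const (W A B q n k)
  have hbound : ∀ (n : ℕ) (y : ℝ), y ∈ Metric.ball (0:ℝ) T →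
      ‖((n : ℝ) * y ^ (n - 1) / n.factorial) • W A B q n k‖ ≤
        ‖B‖ ^ q * ((n : ℝ) ^ (q + 1) * (T * C) ^ n / n.factorial) := by
    intro n y hy
    have hyT : |y| ≤ T := by
      have := hy
      simp only [Metric.mem_ball, Real.dist_eq, sub_zero] at this
      exact this.le
    rw [norm_smul, Real.norm_eq_abs, abs_div, abs_mul, Nat.abs_cast, abs_pow, Nat.abs_cast]
    have h1 : |y| ^ (n - 1) ≤ T ^ n :=
      le_trans (pow_le_pow_left₀ (abs_nonneg y) hyT _) (pow_le_pow_right₀ hT1 (Nat.sub_le n 1))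
    have h2 := W_norm_le A B hone n q k C hC1 hC
    calc (n : ℝ) * |y| ^ (n - 1) / n.factorial * ‖W A B q n k‖
        ≤ (n : ℝ) * T ^ n / n.factorial * ((n : ℝ) ^ q * ‖B‖ ^ q * C ^ n) := by
          have e1 : (n : ℝ) * |y| ^ (n - 1) / n.factorial ≤ (n : ℝ) * T ^ n / n.factorial := by
            gcongr
          exact mul_le_mul e1 h2 (norm_nonneg _) (by positivity)
      _ = ‖B‖ ^ q * ((n : ℝ) ^ (q + 1) * (T * C) ^ n / n.factorial) := by
          rw [mul_pow]; ring
  have Hd := hasDerivAt_tsum_of_isPreconnected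
    (u := fun n : ℕ => ‖B‖ ^ q * ((n : ℝ) ^ (q + 1) * (T * C) ^ n / n.factorial))
    (g := fun (n : ℕ) (t' : ℝ) => (t' ^ n / n.factorial : ℝ) • W A B q n k)
    (g' := fun (n : ℕ) (y : ℝ) => ((n : ℝ) * y ^ (n - 1) / n.factorial) • W A B q n k)
    ((aux_summable (q + 1) (T * C)).mul_left _)
    Metric.isOpen_ball (convex_ball (0:ℝ) T).isPreconnected
    (fun n y _ => hderiv n y)
    (fun n y hy => hbound n y hy)
    (Metric.mem_ball_self (by linarith))
    (S_summable A B hone q 0 k hC1 hC)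
    htT
  have hsum : ∀ q', Summable (fun n : ℕ => (t ^ n / n.factorial : ℝ) • W A B q' n k) :=
    fun q' => S_summable' A B hone q' t k
  have ha : Summable (fun n : ℕ => ((n : ℝ) * t ^ (n - 1) / n.factorial) • W A B q n k) :=
    Summable.of_norm_bounded ((aux_summable (q + 1) (T * C)).mul_left _)
      (fun n => hbound n t htT)
  have hrw : (∑' n : ℕ, ((n : ℝ) * t ^ (n - 1) / n.factorial) • W A B q n k)
      = (k • B + A) * S A B q t k + (q : ℝ) • (B * S A B (q - 1) t k) := by
    rw [Summable.tsum_eq_zero_add ha]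
    simp only [Nat.cast_zero, zero_mul, zero_div, zero_smul, zero_add]
    have hterm : ∀ n : ℕ,
        (((n + 1 : ℕ) : ℝ) * t ^ ((n + 1) - 1) / (n + 1).factorial) • W A B q (n + 1) k
        = (k • B + A) * ((t ^ n / n.factorial : ℝ) • W A B q n k)
          + (q : ℝ) • (B * ((t ^ n / n.factorial : ℝ) • W A B (q - 1) n k)) := by
      intro n
      have hsc : (((n + 1 : ℕ) : ℝ) * t ^ ((n + 1) - 1) / (n + 1).factorial)
          = t ^ n / n.factorial := by
        rw [Nat.factorial_succ, Nat.add_sub_cancel]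
        have h0 : ((n : ℝ) + 1) ≠ 0 := by positivity
        push_cast
        field_simp
      rw [hsc]
      show (t ^ n / n.factorial : ℝ) •
          ((k • B + A) * W A B q n k + (q : ℝ) • (B * W A B (q - 1) n k)) = _
      rw [smul_add, mul_smul_comm, smul_comm ((t : ℝ) ^ n / (n.factorial : ℝ)) (q : ℝ),
        mul_smul_comm]
    rw [tsum_congr hterm,
      Summable.tsum_add ((hsum q).mul_left _) (((hsum (q - 1)).mul_left B).const_smul (q : ℝ)),
      Summable.tsum_mul_left _ (hsum q), Summable.tsum_const_smul _ ((hsum (q - 1)).mul_left B),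
      Summable.tsum_mul_left _ (hsum (q - 1))]
    rfl
  rw [← hrw]
  exact Hd

theorem S_time_zero (A B : 𝔸) (q : ℕ) (k : ℝ) :
    S A B q 0 k = if q = 0 then 1 else 0 := by
  have h := tsum_eq_single (L := SummationFilter.unconditional ℕ) (f := fun n : ℕ => ((0:ℝ) ^ n / n.factorial) • W A B q n k) 0
    (fun n hn => by simp [zero_pow hn])
  simp only [S, h]
  simp [W]

theorem commute_S0 (A B : 𝔸) (t k : ℝ) : Commute (k • B + A) (S A B 0 t k) :=
  Commute.tsum_right _ fun n => by
    rw [W_zero_eq]; exact ((Commute.refl _).pow_right n).smul_right _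

theorem S0_mul_S0_neg (A B : 𝔸) (hone : ‖(1 : 𝔸)‖ ≤ 1) (t k : ℝ) :
    S A B 0 t k * S A B 0 (-t) k = 1 := by
  have hE : ∀ s : ℝ, HasDerivAt (fun s' : ℝ => S A B 0 s' k)
      ((k • B + A) * S A B 0 s k) s := by
    intro s; simpa using S_hasDerivAt_t A B hone 0 s k
  have hEneg : ∀ s : ℝ, HasDerivAt (fun s' : ℝ => S A B 0 (-s') k)
      (-((k • B + A) * S A B 0 (-s) k)) s := by
    intro s
    have h := (hE (-s)).scomp s (hasDerivAt_neg s)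
    simpa [Function.comp_def] using h
  have hg : ∀ s : ℝ, HasDerivAt (fun s' : ℝ => S A B 0 s' k * S A B 0 (-s') k) 0 s := by
    intro s
    have h := (hE s).mul (hEneg s)
    convert h using 1
    · rfl
    have hc : (k • B + A) * S A B 0 s k = S A B 0 s k * (k • B + A) :=
      (commute_S0 A B s k).eq
    rw [hc, mul_assoc, mul_neg, add_neg_cancel]
  have hdiff : Differentiable ℝ (fun s' : ℝ => S A B 0 s' k * S A B 0 (-s') k) :=
    fun s => (hg s).differentiableAt
  have h0 := is_const_of_deriv_eq_zero hdiff (fun s => (hg s).deriv) t 0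
  simpa [S_time_zero] using h0

theorem S_norm_le (A B : 𝔸) (hone : ‖(1 : 𝔸)‖ ≤ 1) (k : ℝ)
    (hexp : ∀ s : ℝ, ‖S A B 0 s k‖ ≤ 1) (q : ℕ) :
    ∀ t : ℝ, 0 ≤ t → ‖S A B q t k‖ ≤ (t * ‖B‖) ^ q := by
  induction q with
  | zero => intro t ht; simpa using hexp t
  | succ q ih =>
    intro t ht
    have hE : ∀ s : ℝ, HasDerivAt (fun s' : ℝ => S A B 0 s' k)
        ((k • B + A) * S A B 0 s k) s := by
      intro s; simpa using S_hasDerivAt_t A B hone 0 s k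
    have hEneg : ∀ s : ℝ, HasDerivAt (fun s' : ℝ => S A B 0 (-s') k)
        (-((k • B + A) * S A B 0 (-s) k)) s := by
      intro s
      have h := (hE (-s)).scomp s (hasDerivAt_neg s)
      simpa [Function.comp_def] using h
    have hS1 : ∀ s : ℝ, HasDerivAt (fun s' : ℝ => S A B (q + 1) s' k)
        ((k • B + A) * S A B (q + 1) s k + ((q + 1 : ℕ) : ℝ) • (B * S A B q s k)) s := by
      intro s
      have h := S_hasDerivAt_t A B hone (q + 1) s k
      simpa [Nat.add_sub_cancel] using h
    have hΦ : ∀ s : ℝ, HasDerivAt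
        (fun s' : ℝ => S A B 0 (-s') k * S A B (q + 1) s' k)
        (S A B 0 (-s) k * (((q + 1 : ℕ) : ℝ) • (B * S A B q s k))) s := by
      intro s
      have h := (hEneg s).mul (hS1 s)
      convert h using 1
      · rfl
      have hc : (k • B + A) * S A B 0 (-s) k = S A B 0 (-s) k * (k • B + A) :=
        (commute_S0 A B (-s) k).eq
      rw [mul_add, ← mul_assoc, ← hc, neg_mul]
      abel
    have contψ : Continuous (fun s : ℝ =>
        S A B 0 (-s) k * (((q + 1 : ℕ) : ℝ) • (B * S A B q s k))) := by
      have c1 : Continuous (fun s : ℝ => S A B 0 (-s) k) :=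
        continuous_iff_continuousAt.2 fun s => (hEneg s).continuousAt
      have c2 : Continuous (fun s : ℝ => S A B q s k) :=
        continuous_iff_continuousAt.2 fun s => (S_hasDerivAt_t A B hone q s k).continuousAt
      exact c1.mul (((continuous_const.mul c2)).const_smul _)
    have hFTC := intervalIntegral.integral_eq_sub_of_hasDerivAt
      (f := fun s' : ℝ => S A B 0 (-s') k * S A B (q + 1) s' k)
      (fun s _ => hΦ s) (contψ.intervalIntegrable 0 t)
    have hΦ0 : S A B 0 (-(0:ℝ)) k * S A B (q + 1) 0 k = 0 := by
      simp [S_time_zero]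
    have hInt : S A B 0 (-t) k * S A B (q + 1) t k
        = ∫ s in (0:ℝ)..t, S A B 0 (-s) k * (((q + 1 : ℕ) : ℝ) • (B * S A B q s k)) := by
      rw [hFTC]
      beta_reduce
      rw [hΦ0, sub_zero]
    have hrep : S A B (q + 1) t k
        = S A B 0 t k * (S A B 0 (-t) k * S A B (q + 1) t k) := by
      rw [← mul_assoc, S0_mul_S0_neg A B hone t k, one_mul]
    have hptw : ∀ s ∈ Set.uIoc (0:ℝ) t,
        ‖S A B 0 (-s) k * (((q + 1 : ℕ) : ℝ) • (B * S A B q s k))‖ ≤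
          ((q + 1 : ℕ) : ℝ) * ‖B‖ ^ (q + 1) * s ^ q := by
      intro s hs
      rw [Set.uIoc_of_le ht] at hs
      have hs0 : 0 ≤ s := hs.1.le
      have hih := ih s hs0
      calc ‖S A B 0 (-s) k * (((q + 1 : ℕ) : ℝ) • (B * S A B q s k))‖
          ≤ ‖S A B 0 (-s) k‖ * ‖((q + 1 : ℕ) : ℝ) • (B * S A B q s k)‖ := norm_mul_le _ _
        _ ≤ 1 * ‖((q + 1 : ℕ) : ℝ) • (B * S A B q s k)‖ :=
            mul_le_mul_of_nonneg_right (hexp (-s)) (norm_nonneg _)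
        _ = ((q + 1 : ℕ) : ℝ) * ‖B * S A B q s k‖ := by
            rw [one_mul, norm_smul, Real.norm_natCast]
        _ ≤ ((q + 1 : ℕ) : ℝ) * (‖B‖ * ‖S A B q s k‖) :=
            mul_le_mul_of_nonneg_left (norm_mul_le _ _) (Nat.cast_nonneg _)
        _ ≤ ((q + 1 : ℕ) : ℝ) * (‖B‖ * (s * ‖B‖) ^ q) := by
            refine mul_le_mul_of_nonneg_left ?_ (Nat.cast_nonneg _)
            exact mul_le_mul_of_nonneg_left hih (norm_nonneg _)
        _ = ((q + 1 : ℕ) : ℝ) * ‖B‖ ^ (q + 1) * s ^ q := by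
            rw [mul_pow]; ring
    have hbig : ‖∫ s in (0:ℝ)..t, S A B 0 (-s) k * (((q + 1 : ℕ) : ℝ) • (B * S A B q s k))‖
        ≤ |∫ s in (0:ℝ)..t, ((q + 1 : ℕ) : ℝ) * ‖B‖ ^ (q + 1) * s ^ q| := by
      refine intervalIntegral.norm_integral_le_abs_of_norm_le ?_ ?_
      · exact (MeasureTheory.ae_restrict_iff' measurableSet_uIoc).2
          (Filter.Eventually.of_forall hptw)
      · exact (continuous_const.mul (continuous_pow q)).intervalIntegrable 0 t
    have hcalc : (∫ s in (0:ℝ)..t, ((q + 1 : ℕ) : ℝ) * ‖B‖ ^ (q + 1) * s ^ q)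
        = (t * ‖B‖) ^ (q + 1) := by
      rw [intervalIntegral.integral_const_mul, integral_pow]
      have h0 : ((q : ℝ) + 1) ≠ 0 := by positivity
      push_cast
      field_simp
      ring
    calc ‖S A B (q + 1) t k‖
        = ‖S A B 0 t k * (S A B 0 (-t) k * S A B (q + 1) t k)‖ := by rw [← hrep]
      _ ≤ ‖S A B 0 t k‖ * ‖S A B 0 (-t) k * S A B (q + 1) t k‖ := norm_mul_le _ _
      _ ≤ 1 * ‖S A B 0 (-t) k * S A B (q + 1) t k‖ :=
          mul_le_mul_of_nonneg_right (hexp t) (norm_nonneg _)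
      _ = ‖S A B 0 (-t) k * S A B (q + 1) t k‖ := one_mul _
      _ ≤ |∫ s in (0:ℝ)..t, ((q + 1 : ℕ) : ℝ) * ‖B‖ ^ (q + 1) * s ^ q| := by
          rw [hInt]; exact hbig
      _ = (t * ‖B‖) ^ (q + 1) := by
          rw [hcalc, abs_of_nonneg (by positivity)]

theorem S_zero_eq_exp {𝔹 : Type*} [NormedRing 𝔹] [NormedAlgebra ℂ 𝔹] [CompleteSpace 𝔹]
    (A B : 𝔹) (t k : ℝ) :
    S A B 0 t k = NormedSpace.exp (t • (k • B + A)) := by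
  rw [NormedSpace.exp_eq_tsum ℂ]
  refine tsum_congr fun n => ?_
  rw [W_zero_eq, smul_pow]
  rw [← algebraMap_smul ℂ (t ^ n / n.factorial : ℝ) ((k • B + A) ^ n),
    ← algebraMap_smul ℂ (t ^ n : ℝ) ((k • B + A) ^ n), smul_smul]
  congr 1
  rw [Complex.coe_algebraMap]
  push_cast
  ring

end IterUnitBound

set_option synthInstance.maxHeartbeats 1000000 in
set_option maxHeartbeats 1600000 in
open IterUnitBound in
/-- For `U(t,k) = e^{-it(kL+H)}` with `L`, `H` self-adjoint operators on a
finite-dimensional complex Hilbert space, the `q`-th derivative in `k` satisfies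
`‖∂_k^q U(t,k)‖ ≤ t^q q^q ‖L‖^q` for all `t ≥ 0`. -/
theorem iteratedDeriv_unitary_bound {E : Type*} [NormedAddCommGroup E]
    [InnerProductSpace ℂ E] [FiniteDimensional ℂ E]
    (L H : E →L[ℂ] E) (hL : IsSelfAdjoint L) (hH : IsSelfAdjoint H)
    (t : ℝ) (ht : 0 ≤ t) (q : ℕ) (k : ℝ) :
    ‖iteratedDeriv q
        (fun k' : ℝ => NormedSpace.exp ((-(Complex.I * t)) • ((k' : ℂ) • L + H))) k‖ ≤
      t ^ q * (q : ℝ) ^ q * ‖L‖ ^ q := by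
  obtain ⟨A, hAdef⟩ : ∃ A : E →L[ℂ] E, A = (-Complex.I) • H := ⟨_, rfl⟩
  obtain ⟨B, hBdef⟩ : ∃ B : E →L[ℂ] E, B = (-Complex.I) • L := ⟨_, rfl⟩
  have hone : ‖(1 : E →L[ℂ] E)‖ ≤ 1 := ContinuousLinearMap.norm_id_le
  have hscal : ∀ (t' k' : ℝ), (-(Complex.I * t')) • ((k' : ℂ) • L + H)
      = t' • (k' • B + A) := by
    intro t' k'
    rw [hAdef, hBdef]
    match_scalars <;> simp only [Complex.coe_algebraMap] <;> push_cast <;> ring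
  have hfun : (fun k' : ℝ => NormedSpace.exp ((-(Complex.I * t)) • ((k' : ℂ) • L + H)))
      = fun k' : ℝ => S A B 0 t k' := by
    funext k'
    rw [hscal t k', S_zero_eq_exp]
  have hskew : ∀ (s k' : ℝ), (s • (k' • B + A)) ∈ skewAdjoint (E →L[ℂ] E) := by
    intro s k'
    rw [skewAdjoint.mem_iff]
    have hsB : star B = -B := by
      rw [hBdef, star_smul, hL.star_eq]
      simp
    have hsA : star A = -A := by
      rw [hAdef, star_smul, hH.star_eq]
      simp
    rw [star_smul, star_add, star_smul, hsA, hsB]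
    simp only [star_trivial]
    module
  have hexp : ∀ (k' s : ℝ), ‖S A B 0 s k'‖ ≤ 1 := by
    intro k' s
    rw [S_zero_eq_exp]
    rcases subsingleton_or_nontrivial (E →L[ℂ] E) with hsub | hnt
    · rw [Subsingleton.elim (NormedSpace.exp (s • (k' • B + A))) (0 : E →L[ℂ] E)]
      simp
    · let +nondep : NormedAlgebra ℚ (E →L[ℂ] E) := .restrictScalars ℚ ℂ (E →L[ℂ] E)
      have hu := NormedSpace.exp_mem_unitary_of_mem_skewAdjoint (hskew s k')
      rw [CStarRing.norm_of_mem_unitary hu]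
  have hiter : ∀ q' : ℕ, iteratedDeriv q' (fun k' : ℝ => S A B 0 t k')
      = fun k' : ℝ => S A B q' t k' := by
    intro q'
    induction q' with
    | zero => simp [iteratedDeriv_zero]
    | succ q' ih =>
      rw [iteratedDeriv_succ, ih]
      funext k'
      exact (S_hasDerivAt_k A B hone q' t k').deriv
  rw [hfun, hiter q]
  have hB_norm : ‖B‖ ≤ ‖L‖ := by
    rw [hBdef]
    simpa using ContinuousLinearMap.opNorm_smul_le (-Complex.I) L
  have hbound := S_norm_le A B hone k (hexp k) q t ht
  have hbound2 : ‖S A B q t k‖ ≤ (t * ‖L‖) ^ q := by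
    refine le_trans hbound ?_
    gcongr
  refine le_trans hbound2 ?_
  rw [mul_pow]
  have hq : (1 : ℝ) ≤ (q : ℝ) ^ q := by
    rcases Nat.eq_zero_or_pos q with h | h
    · simp [h]
    · exact one_le_pow₀ (by exact_mod_cast h)
  calc t ^ q * ‖L‖ ^ q = t ^ q * 1 * ‖L‖ ^ q := by ring
    _ ≤ t ^ q * (q : ℝ) ^ q * ‖L‖ ^ q := by
        gcongr
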